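/- (Keller–Osserman bound in one dimension) Let p > 1, c > 0, and let v : (-D/2, D/2) → [0,∞) be a C² function satisfying v'' ≥ c v^p. Then v(0) ≤ C(p, c) D^{-2/(p-1)}, where C(p,c) depends only on p and c. -/

import Mathlib

lemma mono_of_deriv {f f' : ℝ → ℝ} {a b : ℝ} (hab : a ≤ b)
    (hf : ∀ t ∈ Set.Icc a b, HasDerivAt f (f' t) t)
    (hf' : ∀ t ∈ Set.Icc a b, 0 ≤ f' t) : f a ≤ f b := by
  have hmono : MonotoneOn f (Set.Icc a b) := by
    apply monotoneOn_of_deriv_nonneg (convex_Icc a b)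
    · exact fun t ht => (hf t ht).continuousAt.continuousWithinAt
    · intro t ht
      rw [interior_Icc] at ht
      exact ((hf t (Set.Ioo_subset_Icc_self ht)).differentiableAt).differentiableWithinAt
    · intro t ht
      rw [interior_Icc] at ht
      rw [(hf t (Set.Ioo_subset_Icc_self ht)).deriv]
      exact hf' t (Set.Ioo_subset_Icc_self ht)
  exact hmono (Set.left_mem_Icc.2 hab) (Set.right_mem_Icc.2 hab) hab

set_option maxHeartbeats 1000000 in
lemma keller_aux (p c : ℝ) (hp : 1 < p) (hc : 0 < c) (b : ℝ) (hb : 0 < b)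
    (v v' v'' : ℝ → ℝ)
    (hv : ∀ t ∈ Set.Ioo (-b) b, HasDerivAt v (v' t) t)
    (hv' : ∀ t ∈ Set.Ioo (-b) b, HasDerivAt v' (v'' t) t)
    (hpos : ∀ t ∈ Set.Ioo (-b) b, 0 ≤ v t)
    (hode : ∀ t ∈ Set.Ioo (-b) b, c * v t ^ p ≤ v'' t)
    (h0 : 0 ≤ v' 0) :
    v 0 ^ ((p - 1) / 2) * b ≤
      max (Real.sqrt (8 / c)) (4 / (((p - 1) / 2) * Real.sqrt (c / (p + 1)))) := by
  obtain ⟨β, hβ⟩ : ∃ β : ℝ, β = (p - 1) / 2 := ⟨_, rfl⟩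
  obtain ⟨κ, hκ⟩ : ∃ κ : ℝ, κ = Real.sqrt (c / (p + 1)) := ⟨_, rfl⟩
  obtain ⟨q, hq⟩ : ∃ q : ℝ, q = (p + 1) / 2 := ⟨_, rfl⟩
  obtain ⟨m, hmdef⟩ : ∃ m : ℝ, m = v 0 := ⟨_, rfl⟩
  rw [← hmdef, ← hβ, ← hκ]
  have hβpos : 0 < β := by rw [hβ]; linarith
  have hκpos : 0 < κ := by rw [hκ]; exact Real.sqrt_pos.2 (by positivity)
  have hm0 : 0 ≤ m := by rw [hmdef]; exact hpos 0 ⟨by linarith, hb⟩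
  rcases hm0.eq_or_lt with hm | hm
  · rw [← hm, Real.zero_rpow hβpos.ne', zero_mul]
    exact le_trans (Real.sqrt_nonneg _) (le_max_left _ _)
  -- main case : 0 < m
  have hp0 : (0:ℝ) < p := by linarith
  -- v' nonneg on [0, b)
  have hv'nn : ∀ x, 0 ≤ x → x < b → 0 ≤ v' x := by
    intro x hx0 hxb
    have hsub : Set.Icc 0 x ⊆ Set.Ioo (-b) b := fun y hy =>
      ⟨by linarith [hy.1], lt_of_le_of_lt hy.2 hxb⟩
    have key := mono_of_deriv hx0 (fun t ht => hv' t (hsub ht)) (fun t ht => by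
      have h1 := hpos t (hsub ht)
      have h2 := hode t (hsub ht)
      have : (0:ℝ) ≤ c * v t ^ p := by positivity
      linarith)
    linarith
  -- v ≥ m on [0, b)
  have hvm : ∀ x, 0 ≤ x → x < b → m ≤ v x := by
    intro x hx0 hxb
    rw [hmdef]
    exact mono_of_deriv hx0
      (fun t ht => hv t ⟨by linarith [ht.1], lt_of_le_of_lt ht.2 hxb⟩)
      (fun t ht => hv'nn t ht.1 (lt_of_le_of_lt ht.2 hxb))
  have hvpos : ∀ x, 0 ≤ x → x < b → 0 < v x := fun x hx0 hxb =>
    lt_of_lt_of_le hm (hvm x hx0 hxb)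
  -- linear lower bound for v'
  have hlin : ∀ x, 0 ≤ x → x < b → c * m ^ p * x ≤ v' x := by
    intro x hx0 hxb
    have key := mono_of_deriv (f := fun t => v' t - c * m ^ p * t)
      (f' := fun t => v'' t - c * m ^ p) hx0 (fun t ht => by
        have h1 := hv' t ⟨by linarith [ht.1], lt_of_le_of_lt ht.2 hxb⟩
        have h2 : HasDerivAt (fun t : ℝ => c * m ^ p * t) (c * m ^ p) t := by
          simpa using (hasDerivAt_id t).const_mul (c * m ^ p)
        exact h1.sub h2)
      (fun t ht => by
        have h2 := hode t ⟨by linarith [ht.1], lt_of_le_of_lt ht.2 hxb⟩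
        have h3 : m ^ p ≤ v t ^ p :=
          Real.rpow_le_rpow hm0 (hvm t ht.1 (lt_of_le_of_lt ht.2 hxb)) hp0.le
        have h4 : c * m ^ p ≤ c * v t ^ p := by nlinarith
        simp only [sub_nonneg]
        linarith)
    simp only [mul_zero, sub_zero] at key
    linarith
  -- quadratic lower bound for v
  have hquad : ∀ x, 0 ≤ x → x < b → m + c * m ^ p / 2 * x ^ 2 ≤ v x := by
    intro x hx0 hxb
    have key := mono_of_deriv (f := fun t => v t - c * m ^ p / 2 * t ^ 2)
      (f' := fun t => v' t - c * m ^ p * t) hx0 (fun t ht => by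
        have h1 := hv t ⟨by linarith [ht.1], lt_of_le_of_lt ht.2 hxb⟩
        have h2 : HasDerivAt (fun t : ℝ => c * m ^ p / 2 * t ^ 2)
            (c * m ^ p * t) t := by
          have := (hasDerivAt_pow 2 t).const_mul (c * m ^ p / 2)
          refine this.congr_deriv ?_
          push_cast
          ring
        exact h1.sub h2)
      (fun t ht => by
        have := hlin t ht.1 (lt_of_le_of_lt ht.2 hxb)
        simp only [sub_nonneg]
        linarith)
    rw [← hmdef] at key
    nlinarith [key]
  -- the switching time
  obtain ⟨s, hsdef⟩ : ∃ s : ℝ, s = Real.sqrt (2 / (c * m ^ (p - 1))) := ⟨_, rfl⟩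
  have hmp1 : 0 < m ^ (p - 1) := Real.rpow_pos_of_pos hm _
  have hs0 : 0 < s := by rw [hsdef]; exact Real.sqrt_pos.2 (by positivity)
  have hs2 : c * m ^ (p - 1) * s ^ 2 = 2 := by
    rw [hsdef, Real.sq_sqrt (by positivity)]
    field_simp
  have hmsplit : m ^ p = m ^ (p - 1) * m := by
    have h1 : p = (p - 1) + 1 := by ring
    rw [h1, Real.rpow_add_one hm.ne' (p - 1)]
    ring_nf
  -- v ≥ 2m past time s
  have hvs : ∀ x, s ≤ x → x < b → 2 * m ≤ v x := by
    intro x hsx hxb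
    have h1 := hquad x (le_trans hs0.le hsx) hxb
    have h2 : s ^ 2 ≤ x ^ 2 := by nlinarith
    have h6 : c * m ^ p / 2 * s ^ 2 = m := by
      rw [hmsplit]; linear_combination (m / 2) * hs2
    have h7 : 0 < m ^ p := Real.rpow_pos_of_pos hm _
    nlinarith [mul_le_mul_of_nonneg_left h2 (by positivity : (0:ℝ) ≤ c * m ^ p / 2)]
  -- energy estimate
  obtain ⟨k, hkdef⟩ : ∃ k : ℝ, k = 2 * c / (p + 1) := ⟨_, rfl⟩
  have hkpos : 0 < k := by rw [hkdef]; positivity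
  have hE : ∀ x, 0 ≤ x → x < b →
      v' 0 ^ 2 - k * m ^ (p + 1) ≤ v' x ^ 2 - k * v x ^ (p + 1) := by
    intro x hx0 hxb
    rw [hmdef]
    exact mono_of_deriv (f := fun t => v' t ^ 2 - k * v t ^ (p + 1))
      (f' := fun t => 2 * v' t * v'' t - k * (v' t * (p + 1) * v t ^ p)) hx0
      (fun t ht => by
        have htb := lt_of_le_of_lt ht.2 hxb
        have htm : t ∈ Set.Ioo (-b) b := ⟨by linarith [ht.1], htb⟩
        have h1 := (hv' t htm).pow 2
        have h2 := (hv t htm).rpow_const (p := p + 1)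
          (Or.inl (hvpos t ht.1 htb).ne')
        have h3 : p + 1 - 1 = p := by ring
        rw [h3] at h2
        have := h1.sub (h2.const_mul k)
        refine this.congr_deriv ?_
        push_cast
        ring)
      (fun t ht => by
        have htb := lt_of_le_of_lt ht.2 hxb
        have htm : t ∈ Set.Ioo (-b) b := ⟨by linarith [ht.1], htb⟩
        have h1 := hv'nn t ht.1 htb
        have h2 := hode t htm
        have hk1 : k * (p + 1) = 2 * c := by
          rw [hkdef]; field_simp
        show 0 ≤ 2 * v' t * v'' t - k * (v' t * (p + 1) * v t ^ p)
        have hkey : 2 * v' t * v'' t - k * (v' t * (p + 1) * v t ^ p)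
            = 2 * (v' t * (v'' t - c * v t ^ p)) := by
          linear_combination (-(v' t * v t ^ p)) * hk1
        rw [hkey]
        exact mul_nonneg (by norm_num) (mul_nonneg h1 (sub_nonneg.2 h2)))
  -- gradient lower bound past time s
  have hgrad : ∀ x, s ≤ x → x < b → κ * v x ^ q ≤ v' x := by
    intro x hsx hxb
    have hx0 : 0 ≤ x := le_trans hs0.le hsx
    have hE1 := hE x hx0 hxb
    have hv2m := hvs x hsx hxb
    have hvx : 0 < v x := hvpos x hx0 hxb
    have h1 : 2 * m ^ (p + 1) ≤ v x ^ (p + 1) := by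
      have ha : (2 * m) ^ (p + 1) ≤ v x ^ (p + 1) :=
        Real.rpow_le_rpow (by positivity) hv2m (by linarith)
      have hb2 : (2:ℝ) ≤ 2 ^ (p + 1) := by
        calc (2:ℝ) = 2 ^ (1:ℝ) := by rw [Real.rpow_one]
        _ ≤ 2 ^ (p + 1) := Real.rpow_le_rpow_of_exponent_le one_le_two (by linarith)
      have hmul : (2 * m) ^ (p + 1) = 2 ^ (p + 1) * m ^ (p + 1) :=
        Real.mul_rpow (by norm_num) hm0
      nlinarith [Real.rpow_pos_of_pos hm (p + 1)]
    have hk2 : κ ^ 2 = c / (p + 1) := by rw [hκ]; exact Real.sq_sqrt (by positivity)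
    have hq2 : (v x ^ q) ^ 2 = v x ^ (p + 1) := by
      rw [sq, ← Real.rpow_add hvx]
      congr 1
      rw [hq]; ring
    have hsq : (κ * v x ^ q) ^ 2 ≤ v' x ^ 2 := by
      have he : (κ * v x ^ q) ^ 2 = κ ^ 2 * (v x ^ q) ^ 2 := by ring
      rw [he, hk2, hq2]
      have hck : c / (p + 1) = k / 2 := by rw [hkdef]; ring
      rw [hck]
      nlinarith [sq_nonneg (v' 0), mul_le_mul_of_nonneg_left h1 hkpos.le]
    have := Real.sqrt_le_sqrt hsq
    rwa [Real.sqrt_sq (by positivity), Real.sqrt_sq (hv'nn x hx0 hxb)] at this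
  by_cases hcase : b ≤ 2 * s
  · -- case A
    have hββ : (m ^ β) ^ 2 = m ^ (p - 1) := by
      rw [sq, ← Real.rpow_add hm]
      congr 1
      rw [hβ]; ring
    have key : (m ^ β * b) ^ 2 ≤ 8 / c := by
      have he : (m ^ β * b) ^ 2 = m ^ (p - 1) * b ^ 2 := by rw [mul_pow, hββ]
      rw [he]
      have h5 : m ^ (p - 1) * s ^ 2 = 2 / c := by
        field_simp
        linear_combination hs2
      have hb2 : b ^ 2 ≤ 4 * s ^ 2 := by nlinarith
      have h6 : m ^ (p - 1) * (4 * s ^ 2) = 8 / c := by linear_combination 4 * h5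
      nlinarith [mul_le_mul_of_nonneg_left hb2 hmp1.le]
    refine le_trans (Real.le_sqrt_of_sq_le key) (le_max_left _ _)
  · -- case B
    push_neg at hcase
    have hsb : s < b := by linarith
    obtain ⟨t1, ht1def⟩ : ∃ t1 : ℝ, t1 = (s + b) / 2 := ⟨_, rfl⟩
    have hst1 : s ≤ t1 := by rw [ht1def]; linarith
    have ht1b : t1 < b := by rw [ht1def]; linarith
    have h1q : (1 - q : ℝ) = -β := by rw [hq, hβ]; ring
    have hG := mono_of_deriv (f := fun t => -(v t ^ (1 - q)) - β * κ * t)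
      (f' := fun t => -(v' t * (1 - q) * v t ^ (1 - q - 1)) - β * κ) hst1
      (fun t ht => by
        have ht0 : 0 ≤ t := le_trans hs0.le ht.1
        have htb : t < b := lt_of_le_of_lt ht.2 ht1b
        have htm : t ∈ Set.Ioo (-b) b := ⟨by linarith, htb⟩
        have h1 := ((hv t htm).rpow_const (p := 1 - q)
          (Or.inl (hvpos t ht0 htb).ne')).neg
        have h2 : HasDerivAt (fun t : ℝ => β * κ * t) (β * κ) t := by
          simpa using (hasDerivAt_id t).const_mul (β * κ)
        exact h1.sub h2)
      (fun t ht => by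
        have ht0 : 0 ≤ t := le_trans hs0.le ht.1
        have htb : t < b := lt_of_le_of_lt ht.2 ht1b
        have hvt : 0 < v t := hvpos t ht0 htb
        have hvq : 0 < v t ^ q := Real.rpow_pos_of_pos hvt _
        have hgr := hgrad t ht.1 htb
        have hinv : v t ^ (1 - q - 1) = (v t ^ q)⁻¹ := by
          rw [show (1 - q - 1 : ℝ) = -q by ring, Real.rpow_neg hvt.le]
        show 0 ≤ -(v' t * (1 - q) * v t ^ (1 - q - 1)) - β * κ
        rw [hinv]
        have h4 : κ ≤ v' t * (v t ^ q)⁻¹ := by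
          rw [← div_eq_mul_inv, le_div_iff₀ hvq]
          linarith
        have h5 : v' t * (1 - q) * (v t ^ q)⁻¹ = -(β * (v' t * (v t ^ q)⁻¹)) := by
          rw [h1q]; ring
        rw [h5]
        nlinarith)
    -- hG : f s ≤ f t1
    have h2 : v s ^ (1 - q) ≤ m ^ (1 - q) :=
      Real.rpow_le_rpow_of_nonpos hm (hvm s hs0.le hsb) (by rw [h1q]; linarith)
    have h3 : 0 < v t1 ^ (1 - q) :=
      Real.rpow_pos_of_pos (hvpos t1 (by linarith [hs0]) ht1b) _
    have h4 : β * κ * (t1 - s) ≤ m ^ (1 - q) := by nlinarith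
    rw [h1q, Real.rpow_neg hm0] at h4
    have hmb : 0 < m ^ β := Real.rpow_pos_of_pos hm _
    have hβκ : 0 < β * κ := by positivity
    have key : m ^ β * b ≤ 4 / (β * κ) := by
      rw [le_div_iff₀ hβκ]
      have h6 := mul_le_mul_of_nonneg_left h4 hmb.le
      rw [mul_inv_cancel₀ hmb.ne'] at h6
      have h7 : b / 4 ≤ t1 - s := by rw [ht1def]; linarith
      nlinarith [mul_nonneg (mul_nonneg hmb.le hβκ.le) (sub_nonneg.2 h7)]
    exact le_trans key (le_max_right _ _)

set_option maxHeartbeats 1000000 in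
theorem keller_osserman_1d (p c : ℝ) (hp : 1 < p) (hc : 0 < c) :
    ∃ C : ℝ, 0 < C ∧ ∀ D : ℝ, 0 < D → ∀ v v' v'' : ℝ → ℝ,
      (∀ t ∈ Set.Ioo (-(D / 2)) (D / 2), HasDerivAt v (v' t) t) →
      (∀ t ∈ Set.Ioo (-(D / 2)) (D / 2), HasDerivAt v' (v'' t) t) →
      ContinuousOn v'' (Set.Ioo (-(D / 2)) (D / 2)) →
      (∀ t ∈ Set.Ioo (-(D / 2)) (D / 2), 0 ≤ v t) →
      (∀ t ∈ Set.Ioo (-(D / 2)) (D / 2), c * v t ^ p ≤ v'' t) →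
      v 0 ≤ C * D ^ (-(2 / (p - 1))) := by
  obtain ⟨K, hKdef⟩ : ∃ K : ℝ,
      K = 2 * max (Real.sqrt (8 / c))
        (4 / (((p - 1) / 2) * Real.sqrt (c / (p + 1)))) := ⟨_, rfl⟩
  have hK : 0 < K := by
    have ha : 0 < Real.sqrt (8 / c) := Real.sqrt_pos.2 (by positivity)
    have := lt_of_lt_of_le ha
      (le_max_left (Real.sqrt (8 / c)) (4 / (((p - 1) / 2) * Real.sqrt (c / (p + 1)))))
    rw [hKdef]; linarith
  refine ⟨K ^ (2 / (p - 1)), Real.rpow_pos_of_pos hK _, ?_⟩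
  intro D hD v v' v'' hv hv' hcont hpos hode
  have hb : 0 < D / 2 := by linarith
  have key : v 0 ^ ((p - 1) / 2) * D ≤ K := by
    rcases le_or_gt 0 (v' 0) with h0 | h0
    · have h1 := keller_aux p c hp hc (D / 2) hb v v' v'' hv hv' hpos hode h0
      rw [hKdef]
      nlinarith [h1]
    · have hmem : ∀ t : ℝ, t ∈ Set.Ioo (-(D / 2)) (D / 2) →
          -t ∈ Set.Ioo (-(D / 2)) (D / 2) := fun t ht =>
        ⟨by linarith [ht.2], by linarith [ht.1]⟩
      have hu : ∀ t ∈ Set.Ioo (-(D / 2)) (D / 2),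
          HasDerivAt (fun t => v (-t)) ((fun t => -v' (-t)) t) t := by
        intro t ht
        have h1 := (hv (-t) (hmem t ht)).comp t (hasDerivAt_neg t)
        exact h1.congr_deriv (by simp)
      have hu' : ∀ t ∈ Set.Ioo (-(D / 2)) (D / 2),
          HasDerivAt (fun t => -v' (-t)) ((fun t => v'' (-t)) t) t := by
        intro t ht
        have h1 := ((hv' (-t) (hmem t ht)).comp t (hasDerivAt_neg t)).neg
        exact h1.congr_deriv (by simp)
      have h1 := keller_aux p c hp hc (D / 2) hb (fun t => v (-t))
        (fun t => -v' (-t)) (fun t => v'' (-t)) hu hu'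
        (fun t ht => hpos (-t) (hmem t ht)) (fun t ht => hode (-t) (hmem t ht))
        (by simp only [neg_zero]; linarith)
      simp only [neg_zero] at h1
      rw [hKdef]
      nlinarith [h1]
  rcases (hpos 0 ⟨by linarith, hb⟩).eq_or_lt with hm | hm
  · rw [← hm]
    have h1 := Real.rpow_pos_of_pos hK (2 / (p - 1))
    have h2 := Real.rpow_pos_of_pos hD (-(2 / (p - 1)))
    exact le_of_lt (mul_pos h1 h2)
  · have hne : p - 1 ≠ 0 := by intro h; linarith [h]
    have h1 : v 0 ^ ((p - 1) / 2) ≤ K / D := by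
      rw [le_div_iff₀ hD]; exact key
    have h2 : (v 0 ^ ((p - 1) / 2)) ^ (2 / (p - 1)) ≤ (K / D) ^ (2 / (p - 1)) :=
      Real.rpow_le_rpow (Real.rpow_nonneg hm.le _) h1
        (le_of_lt (div_pos two_pos (by linarith)))
    have h3 : (v 0 ^ ((p - 1) / 2)) ^ (2 / (p - 1)) = v 0 := by
      have he : (p - 1) / 2 * (2 / (p - 1)) = 1 := by field_simp
      rw [← Real.rpow_mul hm.le, he, Real.rpow_one]
    have h4 : (K / D) ^ (2 / (p - 1)) = K ^ (2 / (p - 1)) * D ^ (-(2 / (p - 1))) := by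
      rw [Real.div_rpow hK.le hD.le, Real.rpow_neg hD.le, div_eq_mul_inv]
    calc v 0 = (v 0 ^ ((p - 1) / 2)) ^ (2 / (p - 1)) := h3.symm
      _ ≤ (K / D) ^ (2 / (p - 1)) := h2
      _ = K ^ (2 / (p - 1)) * D ^ (-(2 / (p - 1))) := h4
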